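/- arXiv:1011.6252 — 7 statements merged into one kernel-verified Lean document; each statement's English description precedes it below -/
import Mathlib

section
/- The function ω(t) := (1 − e^t)·ln(1 − e^{−t}) + t is concave on (0,∞); equivalently, its second derivative −s/(s−1) + s·ln(s/(s−1)) with s = e^t is ≤ 0 for all t > 0. -/
open Real

lemma exp_neg_lt_one {t : ℝ} (ht : 0 < t) : Real.exp (-t) < 1 := by
  rw [Real.exp_lt_one_iff]; linarith

lemma one_sub_exp_neg_pos {t : ℝ} (ht : 0 < t) : 0 < 1 - Real.exp (-t) := by
  linarith [exp_neg_lt_one ht]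

/-- First derivative of ω. -/
lemma omega_hasDerivAt {t : ℝ} (ht : 0 < t) :
    HasDerivAt (fun t => (1 - Real.exp t) * Real.log (1 - Real.exp (-t)) + t)
      (-(Real.exp t * Real.log (1 - Real.exp (-t)))) t := by
  have hne : 1 - Real.exp (-t) ≠ 0 := (one_sub_exp_neg_pos ht).ne'
  have h2 : HasDerivAt (fun t : ℝ => 1 - Real.exp (-t)) (Real.exp (-t)) t := by
    have := ((Real.hasDerivAt_exp (-t)).comp t (hasDerivAt_neg t)).const_sub 1
    simpa using this
  have hlog : HasDerivAt (fun t : ℝ => Real.log (1 - Real.exp (-t)))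
      (Real.exp (-t) / (1 - Real.exp (-t))) t := h2.log hne
  have h1 : HasDerivAt (fun t : ℝ => 1 - Real.exp t) (-Real.exp t) t := by
    simpa using (Real.hasDerivAt_exp t).const_sub 1
  have hmul := (h1.mul hlog).add (hasDerivAt_id t)
  convert hmul using 1
  all_goals try rfl
  have hexp : Real.exp t * Real.exp (-t) = 1 := by
    rw [← Real.exp_add]; simp
  field_simp
  ring_nf
  nlinarith [hexp]

/-- Second derivative of ω. -/
lemma omega_hasDerivAt2 {t : ℝ} (ht : 0 < t) :
    HasDerivAt (fun t => -(Real.exp t * Real.log (1 - Real.exp (-t))))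
      (-(Real.exp t * Real.log (1 - Real.exp (-t))) - 1 / (1 - Real.exp (-t))) t := by
  have hne : 1 - Real.exp (-t) ≠ 0 := (one_sub_exp_neg_pos ht).ne'
  have h2 : HasDerivAt (fun t : ℝ => 1 - Real.exp (-t)) (Real.exp (-t)) t := by
    have := ((Real.hasDerivAt_exp (-t)).comp t (hasDerivAt_neg t)).const_sub 1
    simpa using this
  have hlog : HasDerivAt (fun t : ℝ => Real.log (1 - Real.exp (-t)))
      (Real.exp (-t) / (1 - Real.exp (-t))) t := h2.log hne
  have hmul := ((Real.hasDerivAt_exp t).mul hlog).neg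
  convert hmul using 1
  all_goals try rfl
  have hexp : Real.exp t * Real.exp (-t) = 1 := by
    rw [← Real.exp_add]; simp
  field_simp
  ring_nf
  nlinarith [hexp]

/-- The second derivative is nonpositive. -/
lemma omega_deriv2_nonpos {t : ℝ} (ht : 0 < t) :
    -(Real.exp t * Real.log (1 - Real.exp (-t))) - 1 / (1 - Real.exp (-t)) ≤ 0 := by
  have h1 : 0 < 1 - Real.exp (-t) := one_sub_exp_neg_pos ht
  have hexp : Real.exp t * Real.exp (-t) = 1 := by rw [← Real.exp_add]; simp
  have hlog : Real.log (1 / (1 - Real.exp (-t))) ≤ 1 / (1 - Real.exp (-t)) - 1 :=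
    Real.log_le_sub_one_of_pos (by positivity)
  rw [Real.log_div one_ne_zero h1.ne', Real.log_one] at hlog
  have hE : 0 < Real.exp t := Real.exp_pos t
  have hid : (Real.exp t - 1) * (1 / (1 - Real.exp (-t))) = Real.exp t := by
    field_simp
    nlinarith [hexp]
  nlinarith [mul_le_mul_of_nonneg_left hlog hE.le, hid]

/-- The function `ω(t) = (1 - e^t) ln (1 - e^{-t}) + t` is concave on `(0, ∞)`;
moreover its second derivative `-s/(s-1) + s ln (s/(s-1))`, with `s = e^t`,
is nonpositive for all `t > 0`. -/
theorem omega_concaveOn :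
    ConcaveOn ℝ (Set.Ioi (0 : ℝ))
      (fun t => (1 - Real.exp t) * Real.log (1 - Real.exp (-t)) + t) ∧
    ∀ t : ℝ, 0 < t →
      -(Real.exp t / (Real.exp t - 1))
        + Real.exp t * Real.log (Real.exp t / (Real.exp t - 1)) ≤ 0 := by
  constructor
  · have hint : interior (Set.Ioi (0 : ℝ)) = Set.Ioi 0 := interior_Ioi
    refine concaveOn_of_hasDerivWithinAt2_nonpos (f' := fun t =>
        -(Real.exp t * Real.log (1 - Real.exp (-t))))
      (f'' := fun t => -(Real.exp t * Real.log (1 - Real.exp (-t))) - 1 / (1 - Real.exp (-t)))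
      (convex_Ioi 0) ?_ ?_ ?_ ?_
    · apply ContinuousOn.add _ continuousOn_id
      apply ContinuousOn.mul (by fun_prop)
      apply ContinuousOn.log (by fun_prop)
      intro x hx
      exact (one_sub_exp_neg_pos hx).ne'
    · rw [hint]; exact fun x hx => (omega_hasDerivAt hx).hasDerivWithinAt
    · rw [hint]; exact fun x hx => (omega_hasDerivAt2 hx).hasDerivWithinAt
    · rw [hint]; exact fun x hx => omega_deriv2_nonpos hx
  · intro t ht
    have hs : 1 < Real.exp t := by nlinarith [Real.add_one_le_exp t]
    have hs1 : 0 < Real.exp t - 1 := by linarith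
    have hlog : Real.log (Real.exp t / (Real.exp t - 1)) ≤
        Real.exp t / (Real.exp t - 1) - 1 :=
      Real.log_le_sub_one_of_pos (by positivity)
    have hE : 0 < Real.exp t := Real.exp_pos t
    have h2 : Real.exp t / (Real.exp t - 1) - 1 = 1 / (Real.exp t - 1) := by
      field_simp
      ring
    rw [h2] at hlog
    have := mul_le_mul_of_nonneg_left hlog hE.le
    have h3 : Real.exp t * (1 / (Real.exp t - 1)) = Real.exp t / (Real.exp t - 1) := by
      ring
    linarith [h3 ▸ this]
end

section
/- Among all vectors Y = (Y_1,…,Y_m) of independent geometrically distributed random variables with fixed total entropy Ω, the point concentration conc(Y) = ∏_{i=1}^m (1 − r_i) (where r_i is the parameter of Y_i) is maximized when all Y_i are identically distributed. Equivalently: for t_1,…,t_m ≥ 0 with ∑_i ω(t_i) = Ω fixed, where ω(t) = (1−e^t)ln(1−e^{−t}) + t, the sum ∑_i t_i is minimized when t_1 = … = t_m. -/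
/-- `ω(t) = (1 - e^t) ln (1 - e^{-t}) + t`, the entropy of a geometric random
variable with parameter `r`, where `t = ln (1/(1-r))`. -/
noncomputable def omegaEnt (t : ℝ) : ℝ :=
  (1 - Real.exp t) * Real.log (1 - Real.exp (-t)) + t

/-- A globally continuous function agreeing with `omegaEnt` on `[0, ∞)`. -/
noncomputable def phiEnt (t : ℝ) : ℝ :=
  t * (Real.exp t - 1) - (Real.exp t - 1) * Real.log (Real.exp t - 1) + t

lemma omegaEnt_eq_phiEnt {t : ℝ} (ht : 0 ≤ t) : omegaEnt t = phiEnt t := by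
  rcases eq_or_lt_of_le ht with rfl | ht
  · simp [omegaEnt, phiEnt]
  · have hy : 0 < Real.exp t - 1 := sub_pos.mpr (Real.one_lt_exp_iff.mpr ht)
    have h1 : (1 : ℝ) - Real.exp (-t) = Real.exp (-t) * (Real.exp t - 1) := by
      rw [mul_sub, ← Real.exp_add]; simp
    rw [omegaEnt, phiEnt, h1, Real.log_mul (Real.exp_ne_zero _) (ne_of_gt hy), Real.log_exp]
    ring

lemma continuous_phiEnt : Continuous phiEnt := by
  unfold phiEnt
  have h : Continuous fun t => (Real.exp t - 1) * Real.log (Real.exp t - 1) :=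
    Real.continuous_mul_log.comp (Real.continuous_exp.sub continuous_const)
  exact ((continuous_id.mul (Real.continuous_exp.sub continuous_const)).sub h).add continuous_id

/-- First derivative of `phiEnt` on `(0, ∞)`. -/
noncomputable def phiD (t : ℝ) : ℝ := Real.exp t * (t - Real.log (Real.exp t - 1))

lemma expSub_pos {t : ℝ} (ht : 0 < t) : 0 < Real.exp t - 1 :=
  sub_pos.mpr (Real.one_lt_exp_iff.mpr ht)

lemma hasDerivAt_phiEnt {t : ℝ} (ht : 0 < t) : HasDerivAt phiEnt (phiD t) t := by
  have hy := expSub_pos ht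
  have hE : HasDerivAt (fun t => Real.exp t - 1) (Real.exp t) t :=
    (Real.hasDerivAt_exp t).sub_const 1
  have h1 : HasDerivAt (fun t => t * (Real.exp t - 1))
      (1 * (Real.exp t - 1) + t * Real.exp t) t := (hasDerivAt_id t).mul hE
  have h2 : HasDerivAt (fun t => (Real.exp t - 1) * Real.log (Real.exp t - 1))
      ((Real.log (Real.exp t - 1) + 1) * Real.exp t) t :=
    HasDerivAt.comp (h₂ := fun x => x * Real.log x) t (Real.hasDerivAt_mul_log (ne_of_gt hy)) hE
  have := ((h1.sub h2).add (hasDerivAt_id t))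
  convert this using 1 <;> try rfl
  simp [phiD]; ring

lemma deriv_phiEnt {t : ℝ} (ht : 0 < t) : deriv phiEnt t = phiD t :=
  (hasDerivAt_phiEnt ht).deriv

lemma hasDerivAt_phiD {t : ℝ} (ht : 0 < t) :
    HasDerivAt phiD (Real.exp t * ((t - Real.log (Real.exp t - 1)) - 1 / (Real.exp t - 1))) t := by
  have hy := expSub_pos ht
  have hE : HasDerivAt (fun t => Real.exp t - 1) (Real.exp t) t :=
    (Real.hasDerivAt_exp t).sub_const 1
  have hlog : HasDerivAt (fun t => Real.log (Real.exp t - 1))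
      (Real.exp t / (Real.exp t - 1)) t := by
    simpa [Function.comp_def, Real.exp_ne_zero, div_eq_mul_inv, mul_comm] using
      (Real.hasDerivAt_log (ne_of_gt hy)).comp t hE
  have hg : HasDerivAt (fun t => t - Real.log (Real.exp t - 1))
      (1 - Real.exp t / (Real.exp t - 1)) t := (hasDerivAt_id t).sub hlog
  have := (Real.hasDerivAt_exp t).mul hg
  convert this using 1 <;> try rfl
  have h2 : 1 - Real.exp t / (Real.exp t - 1) = -(1 / (Real.exp t - 1)) := by
    field_simp
    ring
  rw [h2]; ring

lemma eventually_deriv_phiEnt {t : ℝ} (ht : 0 < t) :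
    deriv phiEnt =ᶠ[nhds t] phiD := by
  filter_upwards [eventually_gt_nhds ht] with x hx using deriv_phiEnt hx

lemma strictMonoOn_phiEnt : StrictMonoOn phiEnt (Set.Ici (0 : ℝ)) := by
  apply strictMonoOn_of_deriv_pos (convex_Ici 0) continuous_phiEnt.continuousOn
  intro x hx
  rw [interior_Ici, Set.mem_Ioi] at hx
  rw [deriv_phiEnt hx]
  have hy := expSub_pos hx
  have hlt : Real.log (Real.exp x - 1) < x := by
    calc Real.log (Real.exp x - 1) < Real.log (Real.exp x) :=
          Real.log_lt_log hy (by linarith)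
      _ = x := Real.log_exp x
  exact mul_pos (Real.exp_pos x) (by linarith)

lemma concaveOn_phiEnt : ConcaveOn ℝ (Set.Ici (0 : ℝ)) phiEnt := by
  apply concaveOn_of_deriv2_nonpos (convex_Ici 0) continuous_phiEnt.continuousOn
  · intro x hx
    rw [interior_Ici, Set.mem_Ioi] at hx
    exact (hasDerivAt_phiEnt hx).differentiableAt.differentiableWithinAt
  · intro x hx
    rw [interior_Ici, Set.mem_Ioi] at hx
    exact (((hasDerivAt_phiD hx).differentiableAt.congr_of_eventuallyEq
      (eventually_deriv_phiEnt hx))).differentiableWithinAt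
  · intro x hx
    rw [interior_Ici, Set.mem_Ioi] at hx
    have hy := expSub_pos hx
    have hd2 : deriv^[2] phiEnt x =
        Real.exp x * ((x - Real.log (Real.exp x - 1)) - 1 / (Real.exp x - 1)) := by
      simp only [Function.iterate_succ, Function.iterate_zero, Function.id_comp,
        Function.comp_apply]
      rw [(eventually_deriv_phiEnt hx).deriv_eq]
      exact (hasDerivAt_phiD hx).deriv
    rw [hd2]
    have hkey : x - Real.log (Real.exp x - 1) ≤ 1 / (Real.exp x - 1) := by
      have h0 : 0 < Real.exp x / (Real.exp x - 1) :=
        div_pos (Real.exp_pos x) hy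
      have := Real.log_le_sub_one_of_pos h0
      rw [Real.log_div (Real.exp_ne_zero x) (ne_of_gt hy), Real.log_exp] at this
      have h2 : Real.exp x / (Real.exp x - 1) - 1 = 1 / (Real.exp x - 1) := by
        field_simp
        ring
      linarith [h2 ▸ this]
    exact mul_nonpos_of_nonneg_of_nonpos (Real.exp_pos x).le (by linarith)

/-- Among vectors of independent geometric random variables with fixed total
entropy `Ω = ∑ ω(tᵢ)`, the concentration `∏ (1 - rᵢ) = exp (-∑ tᵢ)` is maximized
(equivalently, `∑ tᵢ` is minimized) when all coordinates are identically
distributed: if the constant vector with value `c ≥ 0` has the same total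
entropy as `t`, then `m * c ≤ ∑ tᵢ`, i.e.
`∏ (1 - rᵢ) ≤ exp (-m * c)`. -/
theorem conc_le_of_entropy_eq (m : ℕ) (t : Fin m → ℝ) (c : ℝ)
    (ht : ∀ i, 0 ≤ t i) (hc : 0 ≤ c)
    (hent : ∑ i, omegaEnt (t i) = (m : ℝ) * omegaEnt c) :
    (m : ℝ) * c ≤ ∑ i, t i ∧
      Real.exp (-∑ i, t i) ≤ Real.exp (-((m : ℝ) * c)) := by
  have main : (m : ℝ) * c ≤ ∑ i, t i := by
    rcases Nat.eq_zero_or_pos m with rfl | hm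
    · simp
    have hm' : (0 : ℝ) < m := Nat.cast_pos.mpr hm
    have hent' : ∑ i, phiEnt (t i) = (m : ℝ) * phiEnt c := by
      rw [← omegaEnt_eq_phiEnt hc, ← hent]
      exact Finset.sum_congr rfl fun i _ => (omegaEnt_eq_phiEnt (ht i)).symm
    have hjensen := concaveOn_phiEnt.le_map_sum (t := Finset.univ)
      (w := fun _ : Fin m => (1 : ℝ) / m) (p := t)
      (fun i _ => by positivity)
      (by simp [Finset.sum_const, mul_comm]; field_simp)
      (fun i _ => ht i)
    simp only [smul_eq_mul, ← Finset.mul_sum] at hjensen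
    rw [hent'] at hjensen
    have hφc : phiEnt c ≤ phiEnt ((1 / m) * ∑ i, t i) := by
      calc phiEnt c = (1 / m) * ((m : ℝ) * phiEnt c) := by field_simp
        _ ≤ _ := hjensen
    have hmean : (0 : ℝ) ≤ (1 / m) * ∑ i, t i := by
      apply mul_nonneg (by positivity)
      exact Finset.sum_nonneg fun i _ => ht i
    have hcle : c ≤ (1 / m) * ∑ i, t i :=
      (strictMonoOn_phiEnt.le_iff_le hc hmean).mp hφc
    calc (m : ℝ) * c ≤ (m : ℝ) * ((1 / m) * ∑ i, t i) :=
          mul_le_mul_of_nonneg_left hcle hm'.le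
      _ = ∑ i, t i := by field_simp
  exact ⟨main, Real.exp_le_exp.mpr (neg_le_neg main)⟩
end

section
/- Let X_1,…,X_n be independent geometric random variables with parameters q_1,…,q_n ∈ [0,1), let a_1,…,a_n ∈ ℝ^m be the columns of a rank-m real matrix A, and suppose a_{j_1},…,a_{j_m} are linearly independent. Then the point concentration of AX = X_1 a_1 + … + X_n a_n satisfies conc(AX) ≤ (1−q_{j_1})(1−q_{j_2})⋯(1−q_{j_m}). -/
open MeasureTheory ProbabilityTheory

/-- Theorem 1 (core inequality): if `X₁, …, Xₙ` are independent geometric random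
variables with parameters `q₁, …, qₙ ∈ [0,1)`, `a₁, …, aₙ ∈ ℝᵐ` are the columns
of a matrix, and the columns `a_{j₁}, …, a_{jₘ}` are linearly independent,
then the point concentration of `AX = ∑ Xⱼ aⱼ` is at most
`(1 - q_{j₁}) ⋯ (1 - q_{jₘ})`. -/
theorem conc_AX_le_prod
    {Ω : Type*} [MeasurableSpace Ω] (μ : Measure Ω) [IsProbabilityMeasure μ]
    (m n : ℕ) (q : Fin n → ℝ) (hq0 : ∀ j, 0 ≤ q j) (hq1 : ∀ j, q j < 1)
    (X : Fin n → Ω → ℕ) (hXmeas : ∀ j, Measurable (X j))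
    (hindep : iIndepFun X μ)
    (hgeom : ∀ j k, μ {ω | X j ω = k} = ENNReal.ofReal ((1 - q j) * (q j) ^ k))
    (a : Fin n → Fin m → ℝ)
    (J : Fin m → Fin n)
    (hli : LinearIndependent ℝ fun i => a (J i)) :
    ∀ y : Fin m → ℝ,
      μ {ω | ∑ j, (X j ω : ℝ) • a j = y} ≤
        ENNReal.ofReal (∏ i, (1 - q (J i))) := by
  classical
  intro y
  have hJinj : Function.Injective J := by
    intro i i' h
    exact hli.injective (show a (J i) = a (J i') from by rw [h])
  -- key uniqueness lemma
  have key : ∀ g g' : Fin n → ℕ, (∑ j, (g j : ℝ) • a j = y) →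
      (∑ j, (g' j : ℝ) • a j = y) →
      (∀ j, j ∉ Finset.univ.image J → g j = g' j) → g = g' := by
    intro g g' hg hg' hagree
    have hsum : ∑ j, ((g j : ℝ) - (g' j : ℝ)) • a j = 0 := by
      simp only [sub_smul, Finset.sum_sub_distrib, hg, hg', sub_self]
    have h1 : ∑ j ∈ Finset.univ.image J, ((g j : ℝ) - (g' j : ℝ)) • a j = 0 := by
      rw [Finset.sum_subset (Finset.subset_univ _)]
      · exact hsum
      · intro x _ hx
        rw [hagree x hx, sub_self, zero_smul]
    rw [Finset.sum_image (fun i _ i' _ h => hJinj h)] at h1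
    have h2 : ∀ i, ((g (J i) : ℝ) - (g' (J i) : ℝ)) = 0 :=
      Fintype.linearIndependent_iff.mp hli _ h1
    have hJeq : ∀ i, g (J i) = g' (J i) := by
      intro i
      have := sub_eq_zero.mp (h2 i)
      exact_mod_cast this
    funext j
    by_cases hj : j ∈ Finset.univ.image J
    · obtain ⟨i, _, rfl⟩ := Finset.mem_image.mp hj
      exact hJeq i
    · exact hagree j hj
  set T : Finset (Fin n) := (Finset.univ.image J)ᶜ with hT
  set S : Set (Fin n → ℕ) := {g | ∑ j, (g j : ℝ) • a j = y} with hS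
  set C : (Fin n → ℕ) → Set Ω := fun g => ⋂ j, {ω | X j ω = g j} with hC
  set B : (Fin n → ℕ) → Set Ω := fun g => ⋂ j ∈ T, {ω | X j ω = g j} with hB
  have hmeas_comap : ∀ (j : Fin n) (k : ℕ),
      MeasurableSet[MeasurableSpace.comap (X j) inferInstance] {ω | X j ω = k} :=
    fun j k => ⟨{k}, measurableSet_singleton _, rfl⟩
  have hBmeas : ∀ g, MeasurableSet (B g) := by
    intro g
    exact MeasurableSet.biInter (T : Set (Fin n)).to_countable
      (fun j _ => (hXmeas j) (measurableSet_singleton (g j)))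
  -- step 1: event is contained in union over S of C
  have hsub : {ω | ∑ j, (X j ω : ℝ) • a j = y} ⊆ ⋃ g : S, C g := by
    intro ω hω
    refine Set.mem_iUnion.mpr ⟨⟨fun j => X j ω, hω⟩, ?_⟩
    exact Set.mem_iInter.mpr fun j => rfl
  -- step 3: measure of C g
  have hCmeas : ∀ g : Fin n → ℕ, μ (C g) = ∏ j, μ {ω | X j ω = g j} := by
    intro g
    exact hindep.meas_iInter (fun j => hmeas_comap j (g j))
  have hBval : ∀ g : Fin n → ℕ, μ (B g) = ∏ j ∈ T, μ {ω | X j ω = g j} := by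
    intro g
    exact hindep.meas_biInter (fun j _ => hmeas_comap j (g j))
  set K : ENNReal := ENNReal.ofReal (∏ i, (1 - q (J i))) with hK
  have hCle : ∀ g : Fin n → ℕ, μ (C g) ≤ K * μ (B g) := by
    intro g
    rw [hCmeas g, hBval g, ← Finset.prod_mul_prod_compl (Finset.univ.image J)
      (fun j => μ {ω | X j ω = g j}), ← hT]
    refine mul_le_mul_left ?_ _
    rw [Finset.prod_image (fun i _ i' _ h => hJinj h), hK,
      ENNReal.ofReal_prod_of_nonneg (fun i _ => by linarith [hq1 (J i)])]
    refine Finset.prod_le_prod' ?_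
    intro i _
    rw [hgeom]
    refine ENNReal.ofReal_le_ofReal ?_
    have h1 : (q (J i)) ^ (g (J i)) ≤ 1 :=
      pow_le_one₀ (hq0 (J i)) (hq1 (J i)).le
    nlinarith [hq1 (J i)]
  -- step: disjointness of B on S
  have hdisj : Pairwise (Function.onFun Disjoint fun g : S => B g) := by
    intro g g' hne
    refine Set.disjoint_left.mpr ?_
    intro ω hωg hωg'
    refine hne ?_
    refine Subtype.ext ?_
    refine key g.1 g'.1 g.2 g'.2 ?_
    intro j hj
    have h1 : ω ∈ {ω | X j ω = g.1 j} := by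
      have := Set.mem_iInter.mp hωg j
      simpa [hT, Finset.mem_compl, hj] using Set.mem_iInter.mp this
    have h2 : ω ∈ {ω | X j ω = g'.1 j} := by
      have := Set.mem_iInter.mp hωg' j
      simpa [hT, Finset.mem_compl, hj] using Set.mem_iInter.mp this
    rw [← h1, ← h2]
  have hBsum : ∑' g : S, μ (B g.1) ≤ 1 := by
    rw [← measure_iUnion hdisj (fun g => hBmeas g.1)]
    exact prob_le_one
  calc μ {ω | ∑ j, (X j ω : ℝ) • a j = y} ≤ μ (⋃ g : S, C g) := measure_mono hsub
    _ ≤ ∑' g : S, μ (C g.1) := measure_iUnion_le _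
    _ ≤ ∑' g : S, K * μ (B g.1) := ENNReal.tsum_le_tsum fun g => hCle g.1
    _ = K * ∑' g : S, μ (B g.1) := ENNReal.tsum_mul_left
    _ ≤ K * 1 := mul_le_mul_right hBsum K
    _ = K := mul_one K
end

section
/- Let γ > 0 and α > 0, and define c := max{ (1/γ²)·ln[1 + α(1 − cos(γ/√α))], (1/(απ²))·ln[1 + 2α] }. Then for all t with 0 ≤ t ≤ min{γ/√α, π}, we have 1 + α(1 − cos t) ≥ exp(c·α·t²). -/
open Real

/-- Concavity of sin on [0, π]: `λ * sin y ≤ sin (λ * y)`. -/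
lemma aux_sin_concave {l y : ℝ} (hl0 : 0 ≤ l) (hl1 : l ≤ 1) (hy0 : 0 ≤ y)
    (hy1 : y ≤ Real.pi) : l * Real.sin y ≤ Real.sin (l * y) := by
  have h := strictConcaveOn_sin_Icc.concaveOn.2
    (show (0:ℝ) ∈ Set.Icc 0 Real.pi by constructor <;> simp [Real.pi_nonneg])
    (show y ∈ Set.Icc 0 Real.pi from ⟨hy0, hy1⟩)
    (show (0:ℝ) ≤ 1 - l by linarith) hl0 (show (1 - l) + l = 1 by ring)
  have e1 : (1 - l) • Real.sin 0 + l • Real.sin y = l * Real.sin y := by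
    rw [smul_eq_mul, smul_eq_mul, Real.sin_zero]; ring
  have e2 : (1 - l) • (0:ℝ) + l • y = l * y := by
    rw [smul_eq_mul, smul_eq_mul]; ring
  rw [e1, e2] at h; exact h

/-- Bernoulli-type inequality via concavity of log. -/
lemma aux_log_concave {m x : ℝ} (hm0 : 0 ≤ m) (hm1 : m ≤ 1) (hx : 0 ≤ x) :
    m * Real.log (1 + x) ≤ Real.log (1 + m * x) := by
  have h := strictConcaveOn_log_Ioi.concaveOn.2
    (show (1:ℝ) ∈ Set.Ioi 0 by norm_num)
    (show (1 + x) ∈ Set.Ioi (0:ℝ) by simp only [Set.mem_Ioi]; linarith)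
    (show (0:ℝ) ≤ 1 - m by linarith) hm0 (show (1 - m) + m = 1 by ring)
  have e1 : (1 - m) • Real.log 1 + m • Real.log (1 + x) = m * Real.log (1 + x) := by
    rw [smul_eq_mul, smul_eq_mul, Real.log_one]; ring
  have e2 : (1 - m) • (1:ℝ) + m • (1 + x) = 1 + m * x := by
    rw [smul_eq_mul, smul_eq_mul]; ring
  rw [e1, e2] at h; exact h

lemma one_sub_cos_eq (t : ℝ) : 1 - Real.cos t = 2 * Real.sin (t / 2) ^ 2 := by
  have h1 := Real.cos_two_mul' (t / 2)
  have h2 := Real.sin_sq_add_cos_sq (t / 2)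
  have h3 : (2 : ℝ) * (t / 2) = t := by ring
  rw [h3] at h1
  linarith

/-- Key: `ln(1 + α(1 - cos ·))/·²` is "decreasing" on `[0, π]`. -/
lemma aux_key {α : ℝ} (hα : 0 < α) {t s : ℝ} (ht0 : 0 ≤ t) (hts : t ≤ s)
    (hs : s ≤ Real.pi) :
    t ^ 2 * Real.log (1 + α * (1 - Real.cos s))
      ≤ s ^ 2 * Real.log (1 + α * (1 - Real.cos t)) := by
  rcases eq_or_lt_of_le (ht0.trans hts) with hs0 | hs0
  · have ht : t = 0 := le_antisymm (hts.trans hs0.symm.le) ht0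
    simp [ht, ← hs0]
  set l : ℝ := t / s with hl
  have hl0 : 0 ≤ l := div_nonneg ht0 hs0.le
  have hl1 : l ≤ 1 := (div_le_one hs0).2 hts
  have hts2 : t = l * s := by field_simp [hl]; rw [div_mul_cancel₀ _ hs0.ne']
  -- sin inequality at half angles
  have hsin : l * Real.sin (s / 2) ≤ Real.sin (t / 2) := by
    have := aux_sin_concave hl0 hl1 (by linarith : (0:ℝ) ≤ s / 2)
      (by linarith [Real.pi_pos] : s / 2 ≤ Real.pi)
    calc l * Real.sin (s / 2) ≤ Real.sin (l * (s / 2)) := this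
      _ = Real.sin (t / 2) := by rw [hts2]; ring_nf
  have hsin_s : 0 ≤ Real.sin (s / 2) := Real.sin_nonneg_of_nonneg_of_le_pi
    (by linarith) (by linarith [Real.pi_pos])
  -- 1 - cos t ≥ l² (1 - cos s)
  have hcos : l ^ 2 * (1 - Real.cos s) ≤ 1 - Real.cos t := by
    rw [one_sub_cos_eq t, one_sub_cos_eq s]
    nlinarith [hsin, hsin_s, mul_nonneg hl0 hsin_s]
  have hcs : 0 ≤ 1 - Real.cos s := by linarith [Real.cos_le_one s]
  have hct : 0 ≤ 1 - Real.cos t := by linarith [Real.cos_le_one t]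
  have hm0 : 0 ≤ l ^ 2 := sq_nonneg l
  have hm1 : l ^ 2 ≤ 1 := by nlinarith
  have hx : 0 ≤ α * (1 - Real.cos s) := mul_nonneg hα.le hcs
  have hlog : l ^ 2 * Real.log (1 + α * (1 - Real.cos s))
      ≤ Real.log (1 + α * (1 - Real.cos t)) := by
    calc l ^ 2 * Real.log (1 + α * (1 - Real.cos s))
        ≤ Real.log (1 + l ^ 2 * (α * (1 - Real.cos s))) :=
          aux_log_concave hm0 hm1 hx
      _ ≤ Real.log (1 + α * (1 - Real.cos t)) := by
          apply Real.log_le_log (by nlinarith)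
          nlinarith
  have hs2 : (0:ℝ) < s ^ 2 := by positivity
  have : t ^ 2 = l ^ 2 * s ^ 2 := by rw [hts2]; ring
  rw [this]
  calc l ^ 2 * s ^ 2 * Real.log (1 + α * (1 - Real.cos s))
      = s ^ 2 * (l ^ 2 * Real.log (1 + α * (1 - Real.cos s))) := by ring
    _ ≤ s ^ 2 * Real.log (1 + α * (1 - Real.cos t)) := by
        apply mul_le_mul_of_nonneg_left hlog hs2.le

/-- Lemma 7: with `c := max { γ⁻²·ln(1 + α(1 - cos(γ/√α))), (απ²)⁻¹·ln(1 + 2α) }`,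
one has `1 + α(1 - cos t) ≥ exp (c α t²)` for `0 ≤ t ≤ min {γ/√α, π}`. -/
theorem one_add_alpha_ge_exp (γ α : ℝ) (hγ : 0 < γ) (hα : 0 < α)
    (c : ℝ)
    (hc : c = max ((1 / γ ^ 2) * Real.log (1 + α * (1 - Real.cos (γ / Real.sqrt α))))
                  ((1 / (α * Real.pi ^ 2)) * Real.log (1 + 2 * α)))
    (t : ℝ) (ht0 : 0 ≤ t) (ht1 : t ≤ min (γ / Real.sqrt α) Real.pi) :
    Real.exp (c * α * t ^ 2) ≤ 1 + α * (1 - Real.cos t) := by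
  have hsa : 0 < Real.sqrt α := Real.sqrt_pos.2 hα
  have hsa2 : Real.sqrt α ^ 2 = α := Real.sq_sqrt hα.le
  have hγa : 0 < γ / Real.sqrt α := div_pos hγ hsa
  set s : ℝ := min (γ / Real.sqrt α) Real.pi with hsdef
  have hs0 : 0 < s := lt_min hγa Real.pi_pos
  have hsπ : s ≤ Real.pi := min_le_right _ _
  have hct : 0 ≤ 1 - Real.cos t := by linarith [Real.cos_le_one t]
  have hpos : (0:ℝ) < 1 + α * (1 - Real.cos t) := by nlinarith
  rw [← Real.exp_log hpos]
  apply Real.exp_le_exp.2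
  -- reduce to c * α * t² ≤ log(1 + α(1 - cos t))
  have hγ2 : γ ^ 2 = α * (γ / Real.sqrt α) ^ 2 := by
    field_simp
    exact hsa2
  have hcosπ : 1 - Real.cos Real.pi = 2 := by rw [Real.cos_pi]; norm_num
  have hA : (1 / γ ^ 2) * Real.log (1 + α * (1 - Real.cos (γ / Real.sqrt α)))
      = Real.log (1 + α * (1 - Real.cos (γ / Real.sqrt α))) / (α * (γ / Real.sqrt α) ^ 2) := by
    rw [hγ2]; ring
  have hB : (1 / (α * Real.pi ^ 2)) * Real.log (1 + 2 * α)
      = Real.log (1 + α * (1 - Real.cos Real.pi)) / (α * Real.pi ^ 2) := by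
    rw [hcosπ]; ring_nf
  -- c * α * s² ≤ log(1 + α(1 - cos s))
  have hcs : c * (α * s ^ 2) ≤ Real.log (1 + α * (1 - Real.cos s)) := by
    rcases min_cases (γ / Real.sqrt α) Real.pi with ⟨heq, hle⟩ | ⟨heq, hle⟩
    · -- s = γ/√α ≤ π : show max = A, i.e. B ≤ A
      have hkey := aux_key hα hγa.le hle le_rfl
      rw [hcosπ, show (1:ℝ) + α * 2 = 1 + 2 * α from by ring] at hkey
      have hBA : (1 / (α * Real.pi ^ 2)) * Real.log (1 + 2 * α)
          ≤ (1 / γ ^ 2) * Real.log (1 + α * (1 - Real.cos (γ / Real.sqrt α))) := by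
        rw [hA, hB, hcosπ, show (1:ℝ) + α * 2 = 1 + 2 * α from by ring,
          div_le_div_iff₀ (by positivity) (by positivity)]
        nlinarith [mul_le_mul_of_nonneg_left hkey hα.le]
      rw [hc, max_eq_left hBA, hA, hsdef, heq,
        div_mul_cancel₀ _ (ne_of_gt (by positivity))]
    · -- s = π ≤ γ/√α : show max = B, i.e. A ≤ B
      have hγ2π : α * Real.pi ^ 2 ≤ γ ^ 2 := by
        rw [hγ2]
        apply mul_le_mul_of_nonneg_left _ hα.le
        exact pow_le_pow_left₀ Real.pi_pos.le hle.le 2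
      have hlogle : Real.log (1 + α * (1 - Real.cos (γ / Real.sqrt α)))
          ≤ Real.log (1 + 2 * α) := by
        apply Real.log_le_log (by nlinarith [Real.cos_le_one (γ / Real.sqrt α)])
        nlinarith [Real.neg_one_le_cos (γ / Real.sqrt α)]
      have hlognn : 0 ≤ Real.log (1 + 2 * α) :=
        Real.log_nonneg (by linarith)
      have hAB : (1 / γ ^ 2) * Real.log (1 + α * (1 - Real.cos (γ / Real.sqrt α)))
          ≤ (1 / (α * Real.pi ^ 2)) * Real.log (1 + 2 * α) := by
        rw [div_mul_eq_mul_div, div_mul_eq_mul_div,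
          div_le_div_iff₀ (by positivity) (by positivity)]
        have h1 : Real.log (1 + α * (1 - Real.cos (γ / Real.sqrt α))) * (α * Real.pi ^ 2)
            ≤ Real.log (1 + 2 * α) * (α * Real.pi ^ 2) := by
          apply mul_le_mul_of_nonneg_right hlogle (by positivity)
        have h2 : Real.log (1 + 2 * α) * (α * Real.pi ^ 2)
            ≤ Real.log (1 + 2 * α) * γ ^ 2 :=
          mul_le_mul_of_nonneg_left hγ2π hlognn
        nlinarith [h1, h2]
      rw [hc, max_eq_right hAB, hsdef, heq, hcosπ,
        show (1:ℝ) + α * 2 = 1 + 2 * α from by ring]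
      rw [one_div, mul_comm ((α * Real.pi ^ 2)⁻¹) (Real.log (1 + 2 * α)), mul_assoc,
        inv_mul_cancel₀ (ne_of_gt (by positivity)), mul_one]
  -- key step: t² log(1+α(1-cos s)) ≤ s² log(1+α(1-cos t))
  have hkey := aux_key hα ht0 ht1 hsπ
  have hc0 : 0 ≤ c := by
    rw [hc]
    refine le_trans ?_ (le_max_right _ _)
    have : 0 ≤ Real.log (1 + 2 * α) := Real.log_nonneg (by linarith)
    positivity
  -- conclude: multiply/cancel by s²
  have hs2 : (0:ℝ) < s ^ 2 := by positivity
  rw [← mul_le_mul_iff_of_pos_right hs2]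
  calc c * α * t ^ 2 * s ^ 2 = (c * (α * s ^ 2)) * t ^ 2 := by ring
    _ ≤ Real.log (1 + α * (1 - Real.cos s)) * t ^ 2 := by
        apply mul_le_mul_of_nonneg_right hcs (by positivity)
    _ = t ^ 2 * Real.log (1 + α * (1 - Real.cos s)) := by ring
    _ ≤ s ^ 2 * Real.log (1 + α * (1 - Real.cos t)) := hkey
    _ = Real.log (1 + α * (1 - Real.cos t)) * s ^ 2 := by ring
end

section
/- For a fixed γ > 0, the function g(x) := x·(1 − cos(γ/√x)) is increasing on [γ²/π², ∞). -/
open Real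


lemma g_hasDerivAt (γ : ℝ) {x : ℝ} (hx : 0 < x) :
    HasDerivAt (fun x : ℝ => x * (1 - Real.cos (γ / Real.sqrt x)))
      (1 - Real.cos (γ / Real.sqrt x)
        - γ / Real.sqrt x / 2 * Real.sin (γ / Real.sqrt x)) x := by
  have hs0 : Real.sqrt x ≠ 0 := (Real.sqrt_pos.2 hx).ne'
  have hs : HasDerivAt Real.sqrt (1 / (2 * Real.sqrt x)) x := Real.hasDerivAt_sqrt hx.ne'
  have hdiv : HasDerivAt (fun x => γ / Real.sqrt x)
      ((0 * Real.sqrt x - γ * (1 / (2 * Real.sqrt x))) / Real.sqrt x ^ 2) x :=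
    (hasDerivAt_const x γ).div hs hs0
  have hcos := (Real.hasDerivAt_cos (γ / Real.sqrt x)).comp x hdiv
  have hone := (hasDerivAt_const x (1:ℝ)).sub hcos
  have hfin := (hasDerivAt_id x).mul hone
  convert hfin using 1
  all_goals try rfl
  have hsq : Real.sqrt x ^ 2 = x := Real.sq_sqrt hx.le
  simp only [Pi.sub_apply, Function.comp_apply, id]
  field_simp
  rw [hsq]
  rw [pow_succ, hsq]
  ring_nf

/-- For fixed `γ > 0`, the function `g(x) = x (1 - cos (γ/√x))` is increasing
on `[γ²/π², ∞)`. -/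
theorem g_monotoneOn (γ : ℝ) (hγ : 0 < γ) :
    MonotoneOn (fun x : ℝ => x * (1 - Real.cos (γ / Real.sqrt x)))
      (Set.Ici (γ ^ 2 / Real.pi ^ 2)) := by
  have hπ := Real.pi_pos
  have ha : 0 < γ ^ 2 / Real.pi ^ 2 := by positivity
  apply monotoneOn_of_deriv_nonneg (convex_Ici _)
  · exact fun x hx => (g_hasDerivAt γ (lt_of_lt_of_le ha hx)).continuousAt.continuousWithinAt
  · intro x hx
    rw [interior_Ici] at hx
    exact (g_hasDerivAt γ (ha.trans hx)).differentiableAt.differentiableWithinAt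
  · intro x hx
    rw [interior_Ici] at hx
    have hxpos : 0 < x := ha.trans hx
    rw [(g_hasDerivAt γ hxpos).deriv]
    set u := γ / Real.sqrt x with hu
    have hsx : 0 < Real.sqrt x := Real.sqrt_pos.2 hxpos
    have hu0 : 0 < u := div_pos hγ hsx
    have huπ : u < Real.pi := by
      rw [hu, div_lt_iff₀ hsx]
      have : γ / Real.pi < Real.sqrt x := by
        rw [show γ / Real.pi = Real.sqrt (γ ^ 2 / Real.pi ^ 2) by
          rw [show γ ^ 2 / Real.pi ^ 2 = (γ / Real.pi) ^ 2 by ring,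
            Real.sqrt_sq (by positivity)]]
        exact Real.sqrt_lt_sqrt ha.le hx
      have := mul_lt_mul_of_pos_right this hπ
      rw [div_mul_cancel₀ _ hπ.ne'] at this
      linarith
    -- show 0 ≤ 1 - cos u - u/2 * sin u
    have ht0 : 0 < u / 2 := by linarith
    have ht2 : u / 2 < Real.pi / 2 := by linarith
    have hc : 0 < Real.cos (u / 2) := Real.cos_pos_of_mem_Ioo ⟨by linarith, ht2⟩
    have htan : u / 2 < Real.tan (u / 2) := Real.lt_tan ht0 ht2
    have h3 : u / 2 * Real.cos (u / 2) < Real.sin (u / 2) := by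
      rw [Real.tan_eq_sin_div_cos, lt_div_iff₀ hc] at htan
      exact htan
    have h4 : 0 ≤ Real.sin (u / 2) := Real.sin_nonneg_of_nonneg_of_le_pi ht0.le (by linarith)
    have h1 : Real.cos u = 2 * Real.cos (u / 2) ^ 2 - 1 := by
      have := Real.cos_two_mul (u / 2); rwa [show 2 * (u / 2) = u by ring] at this
    have hpyth := Real.sin_sq_add_cos_sq (u / 2)
    have h2 : Real.sin u = 2 * Real.sin (u / 2) * Real.cos (u / 2) := by
      have := Real.sin_two_mul (u / 2); rw [show 2 * (u / 2) = u by ring] at this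
      linarith
    nlinarith [mul_le_mul_of_nonneg_left h3.le h4]
end

section
/- For all γ > 0 and all α ≥ γ²/π², one has (1/γ²)·ln[1 + α(1 − cos(γ/√α))] ≥ (1/γ²)·ln(1 + 2γ²/π²); and for all 0 < α ≤ γ²/π², one has (1/(απ²))·ln(1 + 2α) ≥ (1/γ²)·ln(1 + 2γ²/π²). Consequently c(α) := max of the two expressions satisfies c(α) ≥ (1/γ²)ln(1 + 2γ²/π²) for all α > 0. -/
open Real

/-- Concavity of log gives `(β) * log(1+2α) ≥ α * log(1+2β)` for `0 < α ≤ β`. -/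
lemma log_concave_aux {α β : ℝ} (hα : 0 < α) (hβ : α ≤ β) :
    (α / β) * Real.log (1 + 2 * β) ≤ Real.log (1 + 2 * α) := by
  have hβ0 : 0 < β := lt_of_lt_of_le hα hβ
  have key := strictConcaveOn_log_Ioi.concaveOn.2
    (by simp : (1:ℝ) ∈ Set.Ioi 0) (by simp; linarith : (1 + 2 * β) ∈ Set.Ioi (0:ℝ))
    (show (0:ℝ) ≤ 1 - α / β by
      have : α / β ≤ 1 := (div_le_one hβ0).2 hβ; linarith)
    (show (0:ℝ) ≤ α / β by positivity)
    (show (1 - α / β) + α / β = 1 by ring)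
  have hx : (1 - α / β) • (1:ℝ) + (α / β) • (1 + 2 * β) = 1 + 2 * α := by
    simp only [smul_eq_mul]; field_simp; ring
  rw [hx] at key
  simpa using key

/-- Theorem 2b's key ingredient: for fixed `γ > 0`, both branches of
`c(α) = max { γ⁻² ln(1 + α(1 - cos(γ/√α))), (απ²)⁻¹ ln(1+2α) }` are bounded
below by `γ⁻² ln(1 + 2γ²/π²)` on their respective ranges, hence so is `c(α)`
for all `α > 0`. -/
theorem c_lower_bound (γ : ℝ) (hγ : 0 < γ) :
    (∀ α : ℝ, γ ^ 2 / Real.pi ^ 2 ≤ α →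
      (1 / γ ^ 2) * Real.log (1 + 2 * γ ^ 2 / Real.pi ^ 2) ≤
        (1 / γ ^ 2) * Real.log (1 + α * (1 - Real.cos (γ / Real.sqrt α)))) ∧
    (∀ α : ℝ, 0 < α → α ≤ γ ^ 2 / Real.pi ^ 2 →
      (1 / γ ^ 2) * Real.log (1 + 2 * γ ^ 2 / Real.pi ^ 2) ≤
        (1 / (α * Real.pi ^ 2)) * Real.log (1 + 2 * α)) ∧
    (∀ α : ℝ, 0 < α →
      (1 / γ ^ 2) * Real.log (1 + 2 * γ ^ 2 / Real.pi ^ 2) ≤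
        max ((1 / γ ^ 2) * Real.log (1 + α * (1 - Real.cos (γ / Real.sqrt α))))
            ((1 / (α * Real.pi ^ 2)) * Real.log (1 + 2 * α))) := by
  have hπ : (0:ℝ) < Real.pi := Real.pi_pos
  have hγ2 : (0:ℝ) < γ ^ 2 := by positivity
  have branch1 : ∀ α : ℝ, γ ^ 2 / Real.pi ^ 2 ≤ α →
      (1 / γ ^ 2) * Real.log (1 + 2 * γ ^ 2 / Real.pi ^ 2) ≤
        (1 / γ ^ 2) * Real.log (1 + α * (1 - Real.cos (γ / Real.sqrt α))) := by
    intro α hα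
    have hα0 : 0 < α := lt_of_lt_of_le (by positivity) hα
    have hs : 0 < Real.sqrt α := Real.sqrt_pos.2 hα0
    set t := γ / Real.sqrt α with ht
    have ht0 : 0 < t := by positivity
    -- t ≤ π : since √α ≥ γ/π
    have hsa : γ / Real.pi ≤ Real.sqrt α := by
      have h1 : Real.sqrt (γ ^ 2 / Real.pi ^ 2) ≤ Real.sqrt α := Real.sqrt_le_sqrt hα
      rwa [show γ ^ 2 / Real.pi ^ 2 = (γ / Real.pi) ^ 2 by ring,
        Real.sqrt_sq (by positivity)] at h1
    have htπ : t ≤ Real.pi := by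
      rw [ht, div_le_iff₀ hs]
      calc γ = Real.pi * (γ / Real.pi) := by field_simp
        _ ≤ Real.pi * Real.sqrt α := by
            exact mul_le_mul_of_nonneg_left hsa hπ.le
    -- Jordan bound: cos t ≤ 1 - 2/π² t²
    have hcos := Real.cos_le_one_sub_mul_cos_sq (x := t) (by
      rw [abs_of_nonneg ht0.le]; exact htπ)
    -- α t² = γ²
    have hαt : α * t ^ 2 = γ ^ 2 := by
      rw [ht, div_pow, Real.sq_sqrt hα0.le]
      field_simp
    have key : 2 * γ ^ 2 / Real.pi ^ 2 ≤ α * (1 - Real.cos t) := by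
      have h1 : α * (2 / Real.pi ^ 2 * t ^ 2) ≤ α * (1 - Real.cos t) :=
        mul_le_mul_of_nonneg_left (by linarith) hα0.le
      calc 2 * γ ^ 2 / Real.pi ^ 2 = α * (2 / Real.pi ^ 2 * t ^ 2) := by
            rw [show α * (2 / Real.pi ^ 2 * t ^ 2) = 2 * (α * t ^ 2) / Real.pi ^ 2 by ring, hαt]
        _ ≤ _ := h1
    apply mul_le_mul_of_nonneg_left _ (by positivity)
    apply Real.log_le_log (by positivity)
    linarith
  have branch2 : ∀ α : ℝ, 0 < α → α ≤ γ ^ 2 / Real.pi ^ 2 →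
      (1 / γ ^ 2) * Real.log (1 + 2 * γ ^ 2 / Real.pi ^ 2) ≤
        (1 / (α * Real.pi ^ 2)) * Real.log (1 + 2 * α) := by
    intro α hα0 hα
    set β := γ ^ 2 / Real.pi ^ 2 with hβ
    have hβ0 : 0 < β := by positivity
    have key := log_concave_aux hα0 hα
    have h2 : 1 + 2 * γ ^ 2 / Real.pi ^ 2 = 1 + 2 * β := by rw [hβ]; ring
    rw [h2]
    rw [one_div, one_div, inv_mul_eq_div, inv_mul_eq_div,
      div_le_div_iff₀ hγ2 (by positivity)]
    have hγβ : γ ^ 2 = β * Real.pi ^ 2 := by rw [hβ]; field_simp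
    calc Real.log (1 + 2 * β) * (α * Real.pi ^ 2)
        = (α / β * Real.log (1 + 2 * β)) * (β * Real.pi ^ 2) := by
          field_simp
      _ ≤ Real.log (1 + 2 * α) * (β * Real.pi ^ 2) :=
          mul_le_mul_of_nonneg_right key (by positivity)
      _ = Real.log (1 + 2 * α) * γ ^ 2 := by rw [hγβ]
  refine ⟨branch1, branch2, ?_⟩
  intro α hα0
  rcases le_or_gt (γ ^ 2 / Real.pi ^ 2) α with h | h
  · exact (branch1 α h).trans (le_max_left _ _)
  · exact (branch2 α hα0 h.le).trans (le_max_right _ _)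
end

section
/- Let X_1,…,X_p be independent integer-valued random variables such that each X_j is uniformly distributed on a set of N_j distinct integers a_{j,1} < a_{j,2} < … < a_{j,N_j}. If (i_1,…,i_p) and (i'_1,…,i'_p) are tuples with 1 ≤ i_j, i'_j ≤ N_j and a_{1,i_1} + … + a_{p,i_p} = a_{1,i'_1} + … + a_{p,i'_p}, then the tuples are equal or incomparable in the componentwise partial order. Consequently, conc(X_1 + … + X_p) ≤ w([N_1] × … × [N_p]) / (N_1 N_2 ⋯ N_p), where w denotes the width (maximum antichain size) of the product of chains of lengths N_1,…,N_p. -/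
open MeasureTheory ProbabilityTheory ENNReal

/-- The width (maximum antichain cardinality) of the product of chains
`[N 0] × … × [N (p-1)]`, with the componentwise partial order. -/
noncomputable def chainProductWidth (p : ℕ) (N : Fin p → ℕ) : ℕ :=
  sSup {c | ∃ A : Finset ((j : Fin p) → Fin (N j)),
    IsAntichain (· ≤ ·) (A : Set ((j : Fin p) → Fin (N j))) ∧ A.card = c}

lemma sum_eq_of_le {p : ℕ} {N : Fin p → ℕ}
    (a : (j : Fin p) → Fin (N j) → ℤ) (ha : ∀ j, StrictMono (a j))
    {i i' : (j : Fin p) → Fin (N j)} (hle : i ≤ i')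
    (hsum : (∑ j, a j (i j)) = (∑ j, a j (i' j))) : i = i' := by
  have hptle : ∀ j ∈ Finset.univ, a j (i j) ≤ a j (i' j) := fun j _ =>
    (ha j).monotone (hle j)
  have := (Finset.sum_eq_sum_iff_of_le hptle).mp hsum
  funext j
  exact (ha j).injective (this j (Finset.mem_univ j))

/-- Proposition 3a (uniform case): if `X₁, …, X_p` are independent, `X j`
uniform on the strictly increasing values `a j 0 < a j 1 < …` (`N j` of them),
then tuples with equal value-sums are equal or incomparable in the
componentwise order, and consequently
`conc (X₁ + ⋯ + X_p) ≤ w([N₁] × ⋯ × [N_p]) / (N₁ ⋯ N_p)`. -/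
theorem conc_sum_le_width_div
    {Ω : Type*} [MeasurableSpace Ω] (μ : Measure Ω) [IsProbabilityMeasure μ]
    (p : ℕ) (N : Fin p → ℕ) (hN : ∀ j, 0 < N j)
    (a : (j : Fin p) → Fin (N j) → ℤ) (ha : ∀ j, StrictMono (a j))
    (X : Fin p → Ω → ℤ) (hXmeas : ∀ j, Measurable (X j))
    (hindep : iIndepFun X μ)
    (hunif : ∀ j i, μ {ω | X j ω = a j i} = 1 / (N j : ℝ≥0∞))
    (hsupp : ∀ j k, (∀ i, a j i ≠ k) → μ {ω | X j ω = k} = 0) :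
    (∀ i i' : (j : Fin p) → Fin (N j),
        (∑ j, a j (i j)) = (∑ j, a j (i' j)) →
          i = i' ∨ ¬(i ≤ i' ∨ i' ≤ i)) ∧
    ∀ z : ℤ,
      μ {ω | (∑ j, X j ω) = z} ≤
        (chainProductWidth p N : ℝ≥0∞) / ∏ j, (N j : ℝ≥0∞) := by
  have part1 : ∀ i i' : (j : Fin p) → Fin (N j),
      (∑ j, a j (i j)) = (∑ j, a j (i' j)) →
        i = i' ∨ ¬(i ≤ i' ∨ i' ≤ i) := by
    intro i i' hsum
    by_cases h : i = i'
    · exact Or.inl h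
    · refine Or.inr ?_
      rintro (hle | hle)
      · exact h (sum_eq_of_le a ha hle hsum)
      · exact h (sum_eq_of_le a ha hle hsum.symm).symm
  refine ⟨part1, fun z => ?_⟩
  -- the set of tuples with value-sum `z`
  set S : Finset ((j : Fin p) → Fin (N j)) :=
    Finset.univ.filter (fun i => (∑ j, a j (i j)) = z) with hS
  -- S is an antichain
  have hanti : IsAntichain (· ≤ ·) (S : Set ((j : Fin p) → Fin (N j))) := by
    intro i hi i' hi' hne hle
    simp only [hS, Finset.coe_filter, Set.mem_setOf_eq, Finset.mem_univ, true_and] at hi hi'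
    rcases part1 i i' (hi.trans hi'.symm) with h | h
    · exact hne h
    · exact h (Or.inl hle)
  -- card S ≤ width
  have hcard : S.card ≤ chainProductWidth p N := by
    apply le_csSup
    · refine ⟨Fintype.card ((j : Fin p) → Fin (N j)), ?_⟩
      rintro c ⟨A, -, rfl⟩
      exact Finset.card_le_univ A
    · exact ⟨S, hanti, rfl⟩
  -- the good events
  set E : ((j : Fin p) → Fin (N j)) → Set Ω :=
    fun i => ⋂ j, X j ⁻¹' {a j (i j)} with hE
  -- the bad event for coordinate j
  have hbad : ∀ j, μ {ω | ∀ i, X j ω ≠ a j i} = 0 := by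
    intro j
    have hsub : {ω | ∀ i, X j ω ≠ a j i} ⊆
        ⋃ k : ℤ, {ω | X j ω = k ∧ ∀ i, a j i ≠ k} := by
      intro ω hω
      exact Set.mem_iUnion.2 ⟨X j ω, rfl, fun i hi => hω i hi.symm⟩
    refine measure_mono_null hsub (measure_iUnion_null fun k => ?_)
    by_cases hk : ∀ i, a j i ≠ k
    · refine measure_mono_null (fun ω hω => hω.1) (hsupp j k hk)
    · push_neg at hk
      obtain ⟨i, hi⟩ := hk
      have : {ω | X j ω = k ∧ ∀ i, a j i ≠ k} = ∅ := by
        ext ω; simp only [Set.mem_setOf_eq, Set.mem_empty_iff_false, iff_false, not_and,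
          not_forall, not_not]
        exact fun _ => ⟨i, hi⟩
      simp [this]
  -- the inclusion
  have hincl : {ω | (∑ j, X j ω) = z} ⊆
      (⋃ i ∈ S, E i) ∪ ⋃ j, {ω | ∀ i, X j ω ≠ a j i} := by
    intro ω hω
    by_cases hgood : ∀ j, ∃ i, X j ω = a j i
    · left
      choose i hi using hgood
      have hiS : i ∈ S := by
        simp only [hS, Finset.mem_filter, Finset.mem_univ, true_and]
        rw [← hω]
        exact Finset.sum_congr rfl fun j _ => (hi j).symm
      exact Set.mem_biUnion hiS (Set.mem_iInter.2 fun j => hi j)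
    · right
      push_neg at hgood
      obtain ⟨j, hj⟩ := hgood
      exact Set.mem_iUnion.2 ⟨j, hj⟩
  -- measure of each good event
  have hEmeas : ∀ i, μ (E i) = ∏ j, (1 : ℝ≥0∞) / (N j : ℝ≥0∞) := by
    intro i
    have h1 := hindep.measure_inter_preimage_eq_mul (S := Finset.univ)
      (sets := fun j => {a j (i j)}) (fun j _ => measurableSet_singleton _)
    have h2 : (⋂ j ∈ Finset.univ, X j ⁻¹' {a j (i j)}) = E i := by
      simp [hE]
    rw [← h2, h1]
    refine Finset.prod_congr rfl fun j _ => ?_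
    have h3 : X j ⁻¹' {a j (i j)} = {ω | X j ω = a j (i j)} := rfl
    rw [h3, hunif]
  -- product of 1/N j
  have hprod : (∏ j, (1 : ℝ≥0∞) / (N j : ℝ≥0∞)) = 1 / ∏ j, (N j : ℝ≥0∞) := by
    simp only [one_div]
    rw [← ENNReal.prod_inv_distrib (fun i _ j _ _ => Or.inr (ENNReal.natCast_ne_top _))]
  calc μ {ω | (∑ j, X j ω) = z}
      ≤ μ ((⋃ i ∈ S, E i) ∪ ⋃ j, {ω | ∀ i, X j ω ≠ a j i}) := measure_mono hincl
    _ ≤ μ (⋃ i ∈ S, E i) + μ (⋃ j, {ω | ∀ i, X j ω ≠ a j i}) := measure_union_le _ _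
    _ = μ (⋃ i ∈ S, E i) := by
        rw [measure_iUnion_null fun j => hbad j, add_zero]
    _ ≤ ∑ i ∈ S, μ (E i) := measure_biUnion_finset_le S E
    _ = S.card * (1 / ∏ j, (N j : ℝ≥0∞)) := by
        rw [Finset.sum_congr rfl fun i _ => (hEmeas i).trans hprod]
        simp [Finset.sum_const, nsmul_eq_mul]
    _ ≤ (chainProductWidth p N : ℝ≥0∞) * (1 / ∏ j, (N j : ℝ≥0∞)) := by
        have : (S.card : ℝ≥0∞) ≤ (chainProductWidth p N : ℝ≥0∞) := by
          exact_mod_cast hcard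
        exact mul_le_mul_left this _
    _ = (chainProductWidth p N : ℝ≥0∞) / ∏ j, (N j : ℝ≥0∞) := by
        rw [mul_one_div]
end
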